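/- Let v_1, …, v_d ∈ ℤ^n be linearly independent and λ ∈ ℝ^d_{>0} with Σ λ_i v_i ∈ ℤ^n. If deg(λ) < level(λ), then there exists an atomic μ ∈ ℝ^d_{>0} with μ ≠ λ, Σ μ_i v_i ∈ ℤ^n, and λ ∈ μ + cone_ℤ(e_1, …, e_{level(μ)}), where the e_i are standard unit vectors of ℝ^d. -/

import Mathlib

/-- A coefficient vector `mu ∈ ℝ^d_{>0}` (of a lattice point) is atomic iff
`mu j ≤ 1` for all indices `j` preceding its level `⌈∑ i, mu i⌉`. -/
def AtomicCoeff {d : ℕ} (mu : Fin d → ℝ) : Prop :=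
  ∀ j : Fin d, ((j : ℕ) + 1 : ℤ) < ⌈∑ i, mu i⌉ → mu j ≤ 1

/-- Let `v 0, …, v (d-1) ∈ ℤ^n` be linearly independent and `lam ∈ ℝ^d_{>0}` with
`∑ i, lam i • v i` a lattice point.  If `deg lam < level lam` (i.e. some coordinate
`lam j > 1` with index `j` preceding the level of `lam`), then there is an atomic
`mu ≠ lam`, all of whose coordinates are positive, with `∑ i, mu i • v i` a lattice
point and `lam ∈ mu + cone_ℤ(e_1, …, e_{level mu})`. -/
theorem exists_atomic_below (d n : ℕ) (v : Fin d → Fin n → ℤ)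
    (hv : LinearIndependent ℝ fun i => fun j => ((v i j : ℝ)))
    (lam : Fin d → ℝ) (hpos : ∀ i, 0 < lam i)
    (hlat : ∀ j : Fin n, ∃ z : ℤ, (∑ i, lam i * (v i j : ℝ)) = (z : ℝ))
    (hdeg : ∃ j : Fin d, 1 < lam j ∧ ((j : ℕ) + 1 : ℤ) < ⌈∑ i, lam i⌉) :
    ∃ mu : Fin d → ℝ, mu ≠ lam ∧ (∀ i, 0 < mu i) ∧
      (∀ j : Fin n, ∃ z : ℤ, (∑ i, mu i * (v i j : ℝ)) = (z : ℝ)) ∧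
      AtomicCoeff mu ∧
      ∃ δ : Fin d → ℤ, (∀ i, 0 ≤ δ i) ∧
        (∀ i : Fin d, ⌈∑ j, mu j⌉ < (i : ℕ) + 1 → δ i = 0) ∧
        ∀ i, lam i = mu i + (δ i : ℝ) := by
  classical
  obtain ⟨j0, hj0_gt, hj0_lt⟩ := hdeg
  have hd : 0 < d := j0.pos
  set L : ℤ := ⌈∑ i, lam i⌉ with hLdef
  -- maximal admissible integer decrement at each coordinate
  set M : ℕ → ℤ := fun i => if h : i < d then ⌈lam ⟨i, h⟩⌉ - 1 else 0 with hMdef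
  have hMfin : ∀ i : Fin d, M (i : ℕ) = ⌈lam i⌉ - 1 := by
    intro i; simp [hMdef, i.isLt]
  have hMnn : ∀ i, 0 ≤ M i := by
    intro i
    by_cases h : i < d
    · have h1 : (0:ℤ) < ⌈lam ⟨i, h⟩⌉ := Int.ceil_pos.mpr (hpos _)
      simp only [hMdef, dif_pos h]; omega
    · simp [hMdef, h]
  set D : ℕ → ℤ := fun t => ∑ i ∈ Finset.range t, M i with hDdef
  have hDnn : ∀ t, 0 ≤ D t := fun t => Finset.sum_nonneg fun i _ => hMnn i
  have hDsucc : ∀ t, D (t + 1) = D t + M t := fun t => Finset.sum_range_succ M t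
  -- total: L ≤ D d + d
  have hDd_eq : D d = (∑ i : Fin d, ⌈lam i⌉) - d := by
    have h1 : D d = ∑ i : Fin d, (⌈lam i⌉ - 1) := by
      rw [show D d = ∑ i ∈ Finset.range d, M i from rfl,
        ← Fin.sum_univ_eq_sum_range M d]
      exact Finset.sum_congr rfl fun i _ => by rw [hMfin i]
    rw [h1, Finset.sum_sub_distrib]
    simp
  have hLle : L ≤ D d + d := by
    have h1 : (∑ i, lam i) ≤ ((∑ i : Fin d, ⌈lam i⌉ : ℤ) : ℝ) := by
      push_cast
      exact Finset.sum_le_sum fun i _ => Int.le_ceil _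
    have h2 : L ≤ ∑ i : Fin d, ⌈lam i⌉ := Int.ceil_le.mpr h1
    omega
  -- find the crossing index
  have hwit : L - D ((d - 1) + 1) ≤ ((d - 1 : ℕ) : ℤ) + 1 := by
    have h1 : d - 1 + 1 = d := by omega
    rw [h1]
    have h2 : ((d - 1 : ℕ) : ℤ) = (d : ℤ) - 1 := by
      have := Nat.cast_sub (R := ℤ) hd
      simpa using this
    rw [h2]
    omega
  have hex : ∃ t : ℕ, L - D (t + 1) ≤ (t : ℤ) + 1 := ⟨d - 1, hwit⟩
  set t := Nat.find hex with htdef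
  have htP : L - D (t + 1) ≤ (t : ℤ) + 1 := Nat.find_spec hex
  have htle : t ≤ d - 1 := Nat.find_le hwit
  have htlt : t < d := by omega
  -- lower bound on the level before the crossing
  have hft : (t : ℤ) + 1 ≤ L - D t := by
    rcases Nat.eq_zero_or_pos t with h0 | hp
    · rw [h0]
      have : D 0 = 0 := by simp [hDdef]
      rw [this]
      have : (0:ℤ) ≤ ((j0 : ℕ) : ℤ) := Int.natCast_nonneg _
      push_cast
      omega
    · have hmin := Nat.find_min hex (show t - 1 < t by omega)
      push_neg at hmin
      have h1 : t - 1 + 1 = t := by omega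
      rw [h1] at hmin
      have h2 : ((t - 1 : ℕ) : ℤ) = (t : ℤ) - 1 := by
        have := Nat.cast_sub (R := ℤ) hp
        simpa using this
      rw [h2] at hmin
      omega
  set c : ℤ := L - D t - t - 1 with hcdef
  have hc0 : 0 ≤ c := by omega
  have hcM : c ≤ M t := by
    have := hDsucc t
    omega
  -- the decrement vector and the new coefficient vector
  set δN : ℕ → ℤ := fun i => if i < t then M i else if i = t then c else 0 with hδdef
  set mu : Fin d → ℝ := fun i => lam i - (δN (i : ℕ) : ℝ) with hmudef
  have hδnn : ∀ i, 0 ≤ δN i := by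
    intro i
    simp only [hδdef]
    split
    · exact hMnn i
    · split
      · exact hc0
      · exact le_refl 0
  have hsum_δ : ∑ i : Fin d, δN (i : ℕ) = D t + c := by
    rw [Fin.sum_univ_eq_sum_range δN d]
    have hsub : Finset.range (t + 1) ⊆ Finset.range d := by
      apply Finset.range_subset_range.mpr; omega
    have hvanish : ∀ i ∈ Finset.range d, i ∉ Finset.range (t + 1) → δN i = 0 := by
      intro i _ hi
      simp only [Finset.mem_range, not_lt] at hi
      simp only [hδdef]
      rw [if_neg (by omega), if_neg (by omega)]
    rw [← Finset.sum_subset hsub hvanish, Finset.sum_range_succ]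
    have h1 : ∑ i ∈ Finset.range t, δN i = D t := by
      apply Finset.sum_congr rfl
      intro i hi
      simp only [Finset.mem_range] at hi
      simp [hδdef, hi]
    have h2 : δN t = c := by simp [hδdef]
    rw [h1, h2]
  have hsum_mu : ∑ i, mu i = (∑ i, lam i) - ((D t + c : ℤ) : ℝ) := by
    simp only [hmudef, Finset.sum_sub_distrib]
    congr 1
    rw [← hsum_δ]
    push_cast
    rfl
  have hlev : ⌈∑ i, mu i⌉ = (t : ℤ) + 1 := by
    rw [hsum_mu, Int.ceil_sub_intCast, ← hLdef]
    omega
  refine ⟨mu, ?_, ?_, ?_, ?_, fun i => δN (i : ℕ), fun i => hδnn _, ?_, ?_⟩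
  · -- mu ≠ lam
    have hDc : 0 < D t + c := by
      by_contra hcon
      push_neg at hcon
      have hD0 : D t = 0 := le_antisymm (by omega) (hDnn t)
      have hc00 : c = 0 := by omega
      have hLeq : L = (t : ℤ) + 1 := by omega
      have hj0t : (j0 : ℕ) < t := by
        rw [hLeq] at hj0_lt
        exact_mod_cast (by omega : ((j0 : ℕ) : ℤ) < (t : ℤ))
      have hMj0 : M (j0 : ℕ) = 0 := by
        have := (Finset.sum_eq_zero_iff_of_nonneg
          (fun i _ => hMnn i)).mp hD0 (j0 : ℕ) (Finset.mem_range.mpr hj0t)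
        exact this
      have h2 : (1 : ℤ) < ⌈lam j0⌉ := by
        rw [Int.lt_ceil]; exact_mod_cast hj0_gt
      rw [hMfin j0] at hMj0
      omega
    intro heq
    have hall : ∀ i : Fin d, δN (i : ℕ) = 0 := by
      intro i
      have := congrFun heq i
      simp only [hmudef] at this
      have : (δN (i : ℕ) : ℝ) = 0 := by linarith
      exact_mod_cast this
    have : ∑ i : Fin d, δN (i : ℕ) = 0 := Finset.sum_eq_zero fun i _ => hall i
    omega
  · -- positivity
    intro i
    simp only [hmudef, hδdef]
    by_cases h1 : (i : ℕ) < t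
    · rw [if_pos h1, hMfin i]
      have := Int.ceil_lt_add_one (lam i)
      push_cast
      linarith
    · rw [if_neg h1]
      by_cases h2 : (i : ℕ) = t
      · rw [if_pos h2]
        have hMi : M (i : ℕ) = ⌈lam i⌉ - 1 := hMfin i
        have hcMi : c ≤ ⌈lam i⌉ - 1 := by rw [← hMi, h2]; exact hcM
        have := Int.ceil_lt_add_one (lam i)
        have hcr : (c : ℝ) ≤ (⌈lam i⌉ : ℝ) - 1 := by exact_mod_cast hcMi
        linarith
      · rw [if_neg h2]
        simpa using hpos i
  · -- lattice point
    intro jn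
    obtain ⟨z, hz⟩ := hlat jn
    refine ⟨z - ∑ i : Fin d, δN i.val * v i jn, ?_⟩
    have h1 : ∑ i, mu i * (v i jn : ℝ)
        = (∑ i, lam i * (v i jn : ℝ)) - ∑ i : Fin d, (δN i.val : ℝ) * (v i jn : ℝ) := by
      simp only [hmudef, sub_mul, Finset.sum_sub_distrib]
    rw [h1, hz]
    push_cast
    ring
  · -- atomic
    intro jf hjf
    rw [hlev] at hjf
    have hjt : (jf : ℕ) < t := by exact_mod_cast (by omega : ((jf : ℕ) : ℤ) < (t : ℤ))
    simp only [hmudef, hδdef, if_pos hjt]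
    rw [hMfin jf]
    have := Int.le_ceil (lam jf)
    push_cast
    linarith
  · -- support condition
    intro i hi
    rw [hlev] at hi
    have hti : t < (i : ℕ) := by exact_mod_cast (by omega : (t : ℤ) < ((i : ℕ) : ℤ))
    simp only [hδdef]
    rw [if_neg (by omega), if_neg (by omega)]
  · -- decomposition
    intro i
    simp only [hmudef]
    ring
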